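/- Let B = ⟨a, b ∣ a b a⁻¹ b = 1⟩ be the Klein bottle group, let A be the subgroup of B generated by a² and b, let G be a torsion-free group, and let f : B → G be a group homomorphism with nontrivial kernel. Then the kernel of f meets A nontrivially, i.e. there exists x ∈ A with x ≠ 1 and f(x) = 1. -/

import Mathlib

/-- The single relator `a * b * a⁻¹ * b` of the Klein bottle group,
where `a = FreeGroup.of 0` and `b = FreeGroup.of 1`. -/
def kleinBottleRels : Set (FreeGroup (Fin 2)) :=
  {FreeGroup.of 0 * FreeGroup.of 1 * (FreeGroup.of 0)⁻¹ * FreeGroup.of 1}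

/-- The Klein bottle group `B = ⟨a, b ∣ a b a⁻¹ b = 1⟩`. -/
abbrev KleinBottleGroup : Type := PresentedGroup kleinBottleRels

/-- The generator `a` of the Klein bottle group. -/
def kleinA : KleinBottleGroup := PresentedGroup.of 0

/-- The generator `b` of the Klein bottle group. -/
def kleinB : KleinBottleGroup := PresentedGroup.of 1

/-- The index-two subgroup `A = ⟨a², b⟩` of the Klein bottle group. -/
def kleinTorusSubgroup : Subgroup KleinBottleGroup :=
  Subgroup.closure {kleinA ^ 2, kleinB}

/-- The defining relation of the Klein bottle group. -/
lemma klein_rel : kleinA * kleinB * kleinA⁻¹ * kleinB = 1 := by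
  have h : (FreeGroup.of 0 * FreeGroup.of 1 * (FreeGroup.of 0)⁻¹ * FreeGroup.of 1 :
      FreeGroup (Fin 2)) ∈ Subgroup.normalClosure kleinBottleRels :=
    Subgroup.subset_normalClosure rfl
  have : PresentedGroup.mk kleinBottleRels
      (FreeGroup.of 0 * FreeGroup.of 1 * (FreeGroup.of 0)⁻¹ * FreeGroup.of 1) = 1 :=
    (QuotientGroup.eq_one_iff _).2 h
  simpa [kleinA, kleinB, PresentedGroup.of, map_mul, map_inv] using this

lemma klein_rel1 : kleinA * kleinB * kleinA⁻¹ = kleinB⁻¹ := by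
  rw [eq_inv_iff_mul_eq_one]
  exact klein_rel

lemma klein_rel2 : kleinA⁻¹ * kleinB * kleinA = kleinB⁻¹ := by
  have h := klein_rel1
  have : kleinB = kleinA⁻¹ * kleinB⁻¹ * kleinA := by
    rw [← h]; group
  calc kleinA⁻¹ * kleinB * kleinA = (kleinA⁻¹ * kleinB⁻¹ * kleinA)⁻¹ := by group
    _ = kleinB⁻¹ := by rw [← this]

/-- The exponent-sum-of-`a` homomorphism `B → ℤ`. -/
def kleinPhi : KleinBottleGroup →* Multiplicative ℤ :=
  PresentedGroup.toGroup (f := fun i : Fin 2 => if i = 0 then Multiplicative.ofAdd 1 else 1)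
    (by
      intro r hr
      rw [Set.mem_singleton_iff.mp hr]
      simp [map_mul, map_inv])

lemma kleinPhi_a : kleinPhi kleinA = Multiplicative.ofAdd 1 := by
  simpa [kleinA, kleinPhi] using PresentedGroup.toGroup.of (f := fun i : Fin 2 =>
    if i = 0 then Multiplicative.ofAdd (1:ℤ) else 1) _ (x := 0)

lemma kleinPhi_b : kleinPhi kleinB = 1 := by
  simpa [kleinB, kleinPhi] using PresentedGroup.toGroup.of (f := fun i : Fin 2 =>
    if i = 0 then Multiplicative.ofAdd (1:ℤ) else 1) _ (x := 1)

lemma klein_conj_mem {g : KleinBottleGroup} (hg : g ∈ kleinTorusSubgroup) :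
    kleinA * g * kleinA⁻¹ ∈ kleinTorusSubgroup := by
  induction hg using Subgroup.closure_induction with
  | mem x hx =>
    rcases hx with h | h
    · subst h
      have : kleinA * kleinA ^ 2 * kleinA⁻¹ = kleinA ^ 2 := by group
      rw [this]
      exact Subgroup.subset_closure (Or.inl rfl)
    · subst h
      rw [klein_rel1]
      exact Subgroup.inv_mem _ (Subgroup.subset_closure (Or.inr rfl))
  | one => simpa using Subgroup.one_mem _
  | mul x y _ _ hx hy =>
    have : kleinA * (x * y) * kleinA⁻¹ = (kleinA * x * kleinA⁻¹) * (kleinA * y * kleinA⁻¹) := by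
      group
    rw [this]; exact Subgroup.mul_mem _ hx hy
  | inv x _ hx =>
    have : kleinA * x⁻¹ * kleinA⁻¹ = (kleinA * x * kleinA⁻¹)⁻¹ := by group
    rw [this]; exact Subgroup.inv_mem _ hx

lemma klein_conj_mem' {g : KleinBottleGroup} (hg : g ∈ kleinTorusSubgroup) :
    kleinA⁻¹ * g * kleinA ∈ kleinTorusSubgroup := by
  induction hg using Subgroup.closure_induction with
  | mem x hx =>
    rcases hx with h | h
    · subst h
      have : kleinA⁻¹ * kleinA ^ 2 * kleinA = kleinA ^ 2 := by group
      rw [this]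
      exact Subgroup.subset_closure (Or.inl rfl)
    · subst h
      rw [klein_rel2]
      exact Subgroup.inv_mem _ (Subgroup.subset_closure (Or.inr rfl))
  | one => simpa using Subgroup.one_mem _
  | mul x y _ _ hx hy =>
    have : kleinA⁻¹ * (x * y) * kleinA = (kleinA⁻¹ * x * kleinA) * (kleinA⁻¹ * y * kleinA) := by
      group
    rw [this]; exact Subgroup.mul_mem _ hx hy
  | inv x _ hx =>
    have : kleinA⁻¹ * x⁻¹ * kleinA = (kleinA⁻¹ * x * kleinA)⁻¹ := by group
    rw [this]; exact Subgroup.inv_mem _ hx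

/-- Every element of `B` lies in `A` or in the coset `A·a`. -/
lemma klein_coset (x : KleinBottleGroup) :
    x ∈ kleinTorusSubgroup ∨ x * kleinA⁻¹ ∈ kleinTorusSubgroup := by
  have hx : x ∈ Subgroup.closure (Set.range (PresentedGroup.of :
      Fin 2 → KleinBottleGroup)) := by
    rw [PresentedGroup.closure_range_of]; trivial
  induction hx using Subgroup.closure_induction with
  | mem y hy =>
    obtain ⟨i, rfl⟩ := hy
    fin_cases i
    · right
      show PresentedGroup.of 0 * kleinA⁻¹ ∈ _
      have : PresentedGroup.of (0 : Fin 2) * kleinA⁻¹ = 1 := by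
        rw [show PresentedGroup.of (0 : Fin 2) = kleinA from rfl]; group
      rw [this]; exact Subgroup.one_mem _
    · left
      exact Subgroup.subset_closure (Or.inr rfl)
  | one => left; exact Subgroup.one_mem _
  | mul y z _ _ hy hz =>
    rcases hy with hy | hy <;> rcases hz with hz | hz
    · left; exact Subgroup.mul_mem _ hy hz
    · right
      have : y * z * kleinA⁻¹ = y * (z * kleinA⁻¹) := by group
      rw [this]; exact Subgroup.mul_mem _ hy hz
    · right
      have : y * z * kleinA⁻¹ = (y * kleinA⁻¹) * (kleinA * z * kleinA⁻¹) := by group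
      rw [this]; exact Subgroup.mul_mem _ hy (klein_conj_mem hz)
    · left
      have : y * z = (y * kleinA⁻¹) * (kleinA * (z * kleinA⁻¹) * kleinA⁻¹) * kleinA ^ 2 := by
        group
      rw [this]
      exact Subgroup.mul_mem _ (Subgroup.mul_mem _ hy (klein_conj_mem hz))
        (Subgroup.subset_closure (Or.inl rfl))
  | inv y _ hy =>
    rcases hy with hy | hy
    · left; exact Subgroup.inv_mem _ hy
    · right
      have : y⁻¹ * kleinA⁻¹ = (kleinA ^ 2)⁻¹ * (kleinA * (y * kleinA⁻¹)⁻¹ * kleinA⁻¹) := by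
        group
      rw [this]
      exact Subgroup.mul_mem _ (Subgroup.inv_mem _ (Subgroup.subset_closure (Or.inl rfl)))
        (klein_conj_mem (Subgroup.inv_mem _ hy))

/-- `kleinPhi` is even on `A`. -/
lemma kleinPhi_even {g : KleinBottleGroup} (hg : g ∈ kleinTorusSubgroup) :
    Even (Multiplicative.toAdd (kleinPhi g)) := by
  induction hg using Subgroup.closure_induction with
  | mem x hx =>
    rcases hx with h | h <;> subst h
    · rw [map_pow, kleinPhi_a]
      exact ⟨1, rfl⟩
    · rw [kleinPhi_b]
      exact ⟨0, rfl⟩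
  | one => simp
  | mul x y _ _ hx hy =>
    rw [map_mul]
    exact Even.add hx hy
  | inv x _ hx =>
    rw [map_inv]
    simpa using hx.neg

/-- If `G` is torsion-free and `f : B → G` has nontrivial kernel, then the kernel
of `f` meets the subgroup `A = ⟨a², b⟩` nontrivially. -/
theorem kleinBottle_ker_meets_A {G : Type*} [Group G]
    (hG : ∀ g : G, ∀ n : ℕ, 0 < n → g ^ n = 1 → g = 1)
    (f : KleinBottleGroup →* G)
    (hf : ∃ x : KleinBottleGroup, x ≠ 1 ∧ f x = 1) :
    ∃ x ∈ kleinTorusSubgroup, x ≠ 1 ∧ f x = 1 := by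
  obtain ⟨x, hx1, hxf⟩ := hf
  rcases klein_coset x with hA | hA
  · exact ⟨x, hA, hx1, hxf⟩
  · refine ⟨x ^ 2, ?_, ?_, ?_⟩
    · have : x ^ 2 = (x * kleinA⁻¹) * (kleinA * (x * kleinA⁻¹) * kleinA⁻¹) * kleinA ^ 2 := by
        rw [pow_two, pow_two]; group
      rw [this]
      exact Subgroup.mul_mem _ (Subgroup.mul_mem _ hA (klein_conj_mem hA))
        (Subgroup.subset_closure (Or.inl rfl))
    · -- x² ≠ 1 since φ(x) is odd
      intro h2
      have heven := kleinPhi_even hA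
      have hmap : Multiplicative.toAdd (kleinPhi x) =
          Multiplicative.toAdd (kleinPhi (x * kleinA⁻¹)) + 1 := by
        rw [map_mul, map_inv, kleinPhi_a]
        simp
      have hodd : Odd (Multiplicative.toAdd (kleinPhi x)) := by
        rw [hmap]; exact heven.add_one
      have : kleinPhi (x ^ 2) = 1 := by rw [h2, map_one]
      rw [map_pow] at this
      have h2z : (2 : ℤ) * Multiplicative.toAdd (kleinPhi x) = 0 := by
        have := congrArg Multiplicative.toAdd this
        simpa [two_mul] using this
      have : Multiplicative.toAdd (kleinPhi x) = 0 := by omega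
      rw [this] at hodd
      exact (Int.not_even_iff_odd.mpr hodd) ⟨0, rfl⟩
    · rw [map_pow, hxf, one_pow]
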